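/- arXiv:1302.5789 — 7 statements merged into one kernel-verified Lean document; each statement's English description precedes it below -/
import Mathlib

section
/- Every measure definite kernel is a negative definite kernel; that is, if f(x,y) = μ(S_x △ S_y) for some measure space (Ω,𝓑,μ) and measurable sets S_x indexed by x ∈ Γ, then for every finite collection x_1,…,x_n ∈ Γ and real numbers c_1,…,c_n with ∑ c_i = 0, we have ∑_{i,j} c_i c_j f(x_i,x_j) ≤ 0. -/
open MeasureTheory
open scoped symmDiff

lemma alg_sum_neg_def (n : ℕ) (c a : Fin n → ℝ) (hc : ∑ i, c i = 0) :
    ∑ i, ∑ j, c i * c j * (a i - a j)^2 = -2 * (∑ i, c i * a i)^2 := by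
  have h : ∀ i j : Fin n, c i * c j * (a i - a j)^2 =
      (c i * a i ^ 2) * c j + c i * (c j * a j ^ 2) - 2 * ((c i * a i) * (c j * a j)) := by
    intros; ring
  simp only [h, Finset.sum_add_distrib, Finset.sum_sub_distrib, ← Finset.sum_mul,
    ← Finset.mul_sum, hc]
  ring

/-- Every measure definite kernel is negative definite. -/
theorem measure_definite_is_negative_definite {Γ : Type*} [Countable Γ] (f : Γ → Γ → ℝ)
    (hf0 : ∀ x y, 0 ≤ f x y)
    (hmd : ∃ (Ω : Type) (_ : MeasurableSpace Ω) (μ : Measure Ω) (S : Γ → Set Ω),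
      (∀ x, MeasurableSet (S x)) ∧ ∀ x y, μ (S x ∆ S y) = ENNReal.ofReal (f x y)) :
    ∀ (n : ℕ) (x : Fin n → Γ) (c : Fin n → ℝ), (∑ i, c i = 0) →
      ∑ i, ∑ j, c i * c j * f (x i) (x j) ≤ 0 := by
  obtain ⟨Ω, mΩ, μ, S, hS, hμ⟩ := hmd
  rintro (_ | n) x c hc
  · simp
  set x0 : Γ := x 0 with hx0
  -- replace S by its symmetric difference with a base set, to make measures finite
  set T : Fin (n + 1) → Set Ω := fun i => S (x i) ∆ S x0 with hT
  have hTmeas : ∀ i, MeasurableSet (T i) := fun i =>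
    (hS (x i)).symmDiff (hS x0)
  have hTfin : ∀ i, μ (T i) < ⊤ := by
    intro i
    rw [hT]
    simp only
    rw [hμ]
    exact ENNReal.ofReal_lt_top
  have hTsymm : ∀ i j, T i ∆ T j = S (x i) ∆ S (x j) := by
    intro i j
    ext ω
    simp only [hT, Set.mem_symmDiff]
    tauto
  -- indicator functions
  set g : Fin (n + 1) → Ω → ℝ := fun i => (T i).indicator 1 with hg
  have hsq : ∀ i j (ω : Ω), (g i ω - g j ω) ^ 2 = (T i ∆ T j).indicator (1 : Ω → ℝ) ω := by
    intro i j ω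
    by_cases hi : ω ∈ T i <;> by_cases hj : ω ∈ T j <;>
      simp [hg, Set.indicator_apply, hi, hj, Set.mem_symmDiff]
  -- f equals the integral of the squared difference of indicators
  have hfint : ∀ i j, f (x i) (x j) = ∫ ω, (g i ω - g j ω) ^ 2 ∂μ := by
    intro i j
    have h1 : ∫ ω, (g i ω - g j ω) ^ 2 ∂μ = ∫ ω, (T i ∆ T j).indicator (1 : Ω → ℝ) ω ∂μ := by
      exact integral_congr_ae (Filter.Eventually.of_forall (hsq i j))
    rw [h1, integral_indicator_one ((hTmeas i).symmDiff (hTmeas j)), hTsymm, measureReal_def, hμ,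
      ENNReal.toReal_ofReal (hf0 _ _)]
  have hint : ∀ i j, Integrable (fun ω => (g i ω - g j ω) ^ 2) μ := by
    intro i j
    have : Integrable ((T i ∆ T j).indicator (1 : Ω → ℝ)) μ := by
      rw [integrable_indicator_iff ((hTmeas i).symmDiff (hTmeas j))]
      refine integrableOn_const (ne_of_lt ?_)
      calc μ (T i ∆ T j) ≤ μ (T i) + μ (T j) := (measure_mono Set.symmDiff_subset_union).trans (measure_union_le _ _)
        _ < ⊤ := ENNReal.add_lt_top.2 ⟨hTfin i, hTfin j⟩
    exact this.congr (Filter.Eventually.of_forall fun ω => (hsq i j ω).symm)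
  -- main computation
  have key : ∑ i, ∑ j, c i * c j * f (x i) (x j)
      = ∫ ω, ∑ i, ∑ j, c i * c j * (g i ω - g j ω) ^ 2 ∂μ := by
    rw [integral_finset_sum]
    · refine Finset.sum_congr rfl fun i _ => ?_
      rw [integral_finset_sum]
      · refine Finset.sum_congr rfl fun j _ => ?_
        rw [hfint i j, ← integral_const_mul]
      · exact fun j _ => ((hint i j).const_mul _)
    · intro i _
      exact integrable_finset_sum _ fun j _ => ((hint i j).const_mul _)
  rw [key]
  have hpt : ∀ ω, ∑ i, ∑ j, c i * c j * (g i ω - g j ω) ^ 2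
      = -2 * (∑ i, c i * g i ω) ^ 2 := fun ω =>
    alg_sum_neg_def (n + 1) c (fun i => g i ω) hc
  calc ∫ ω, ∑ i, ∑ j, c i * c j * (g i ω - g j ω) ^ 2 ∂μ
      = ∫ ω, -2 * (∑ i, c i * g i ω) ^ 2 ∂μ := integral_congr_ae
        (Filter.Eventually.of_forall hpt)
    _ = -2 * ∫ ω, (∑ i, c i * g i ω) ^ 2 ∂μ := integral_const_mul _ _
    _ ≤ 0 := by
        have : 0 ≤ ∫ ω, (∑ i, c i * g i ω) ^ 2 ∂μ :=
          integral_nonneg fun ω => sq_nonneg _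
        nlinarith
end

section
/- If f is a measure definite kernel on Γ witnessed by sets S_x in a measure space (Ω,μ), then there exists a measure space (Ω',μ') and sets S'_x such that f(x,y) = μ'(S'_x \ S'_y) = μ'(S'_y \ S'_x) for all x,y ∈ Γ. -/
open MeasureTheory
open scoped symmDiff

/-- A measure definite kernel can be realized so that
`f(x,y) = μ'(S'_x \ S'_y) = μ'(S'_y \ S'_x)`. -/
theorem measure_definite_symmetric_realization {Γ : Type*} [Countable Γ]
    (Ω : Type*) [MeasurableSpace Ω] (μ : Measure Ω) (S : Γ → Set Ω)
    (hS : ∀ x, MeasurableSet (S x)) :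
    ∃ (Ω' : Type*) (_ : MeasurableSpace Ω') (μ' : Measure Ω') (S' : Γ → Set Ω'),
      (∀ x, MeasurableSet (S' x)) ∧
      ∀ x y, μ' (S' x \ S' y) = μ (S x ∆ S y) ∧ μ' (S' y \ S' x) = μ (S x ∆ S y) := by
  classical
  obtain ⟨e, he⟩ : ∃ e : Γ → ℕ, Function.Injective e := Countable.exists_injective_nat Γ
  -- symmetrized sets on the doubled space
  set T : Γ → Set (Ω ⊕ Ω) := fun x => Sum.inl '' S x ∪ Sum.inr '' (S x)ᶜ with hTdef
  have hT : ∀ x, MeasurableSet (T x) := fun x =>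
    (hS x).inl_image.union (hS x).compl.inr_image
  set ν : Measure (Ω ⊕ Ω) := μ.map Sum.inl + μ.map Sum.inr with hνdef
  have keyν : ∀ x y : Γ, ν (T x \ T y) = μ (S x ∆ S y) := by
    intro x y
    have hmeas : MeasurableSet (T x \ T y) := (hT x).diff (hT y)
    rw [hνdef, Measure.add_apply, Measure.map_apply measurable_inl hmeas,
      Measure.map_apply measurable_inr hmeas]
    have h1 : Sum.inl ⁻¹' (T x \ T y) = S x \ S y := by
      ext ω; simp [hTdef]
    have h2 : Sum.inr ⁻¹' (T x \ T y) = S y \ S x := by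
      ext ω; simp [hTdef, not_not]; tauto
    rw [h1, h2, Set.symmDiff_def, measure_union disjoint_sdiff_sdiff ((hS y).diff (hS x))]
  -- map to Cantor space
  set φ : Ω ⊕ Ω → (ℕ → Bool) := fun ω n => decide (∀ x, e x = n → ω ∈ T x) with hφdef
  have hφx : ∀ (x : Γ) (ω : Ω ⊕ Ω), φ ω (e x) = true ↔ ω ∈ T x := by
    intro x ω
    simp only [hφdef, decide_eq_true_iff]
    exact ⟨fun h => h x rfl, fun h x' hx' => by rwa [he hx']⟩
  have hφ : Measurable φ := by
    refine measurable_pi_lambda _ fun n => ?_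
    have hA : MeasurableSet {ω : Ω ⊕ Ω | ∀ x, e x = n → ω ∈ T x} := by
      have : {ω : Ω ⊕ Ω | ∀ x, e x = n → ω ∈ T x}
          = ⋂ x : Γ, {ω | e x = n → ω ∈ T x} := by
        ext ω; simp
      rw [this]
      refine MeasurableSet.iInter fun x => ?_
      by_cases hx : e x = n
      · simpa [hx] using hT x
      · simp [hx]
    refine measurable_to_countable' fun b => ?_
    cases b
    · have : (fun ω => decide (∀ x, e x = n → ω ∈ T x)) ⁻¹' {false}
          = {ω : Ω ⊕ Ω | ∀ x, e x = n → ω ∈ T x}ᶜ := by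
        ext ω; simp
      rw [this]; exact hA.compl
    · have : (fun ω => decide (∀ x, e x = n → ω ∈ T x)) ⁻¹' {true}
          = {ω : Ω ⊕ Ω | ∀ x, e x = n → ω ∈ T x} := by
        ext ω; simp
      rw [this]; exact hA
  set F : Ω ⊕ Ω → ULift (ℕ → Bool) := fun ω => ULift.up (φ ω) with hFdef
  have hF : Measurable F := MeasurableEquiv.ulift.symm.measurable.comp hφ
  refine ⟨ULift (ℕ → Bool), inferInstance, ν.map F,
    fun x => {c : ULift (ℕ → Bool) | c.down (e x) = true}, ?_, ?_⟩
  · intro x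
    show MeasurableSet ((fun c : ULift (ℕ → Bool) => c.down (e x)) ⁻¹' {true})
    exact ((measurable_pi_apply (e x)).comp MeasurableEquiv.ulift.measurable)
      (measurableSet_singleton true)
  · have hSmeas : ∀ x : Γ, MeasurableSet {c : ULift (ℕ → Bool) | c.down (e x) = true} :=
      fun x =>
      show MeasurableSet ((fun c : ULift (ℕ → Bool) => c.down (e x)) ⁻¹' {true}) from
      ((measurable_pi_apply (e x)).comp MeasurableEquiv.ulift.measurable)
        (measurableSet_singleton true)
    have key : ∀ x y : Γ,
        (ν.map F) ({c : ULift (ℕ → Bool) | c.down (e x) = true}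
          \ {c : ULift (ℕ → Bool) | c.down (e y) = true}) = μ (S x ∆ S y) := by
      intro x y
      rw [Measure.map_apply hF ((hSmeas x).diff (hSmeas y))]
      have hpre : F ⁻¹' ({c : ULift (ℕ → Bool) | c.down (e x) = true}
          \ {c : ULift (ℕ → Bool) | c.down (e y) = true}) = T x \ T y := by
        ext ω
        simp only [Set.mem_preimage, Set.mem_diff, Set.mem_setOf_eq, hFdef]
        rw [hφx x ω, hφx y ω]
      rw [hpre, keyν]
    intro x y
    refine ⟨key x y, ?_⟩
    rw [key y x, symmDiff_comm]
end

section
/- Every measure definite kernel on a countable set Γ can be realized on the universal space: there exists a regular Borel measure μ₀ on Ω₀ = {0,1}^Γ \ {constant 0, constant 1} such that f(x,y) = μ₀(S⁰_x △ S⁰_y) for all x,y ∈ Γ, where S⁰_x = {c ∈ Ω₀ : c(x) = 1}. -/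
open MeasureTheory
open scoped symmDiff

/-- The universal space `Ω₀ = {0,1}^Γ` minus the two constant functions. -/
abbrev Omega0 (Γ : Type*) : Type _ :=
  {c : Γ → Bool // (∃ x, c x = true) ∧ (∃ x, c x = false)}

noncomputable instance (Γ : Type*) : MeasurableSpace (Omega0 Γ) := borel _

instance (Γ : Type*) : BorelSpace (Omega0 Γ) := ⟨rfl⟩

/-- `S⁰_x = {c ∈ Ω₀ : c(x) = 1}`. -/
def S0 {Γ : Type*} (x : Γ) : Set (Omega0 Γ) := {c | c.1 x = true}

set_option linter.unusedSectionVars false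
section Aux

variable {Γ : Type*} [Countable Γ]

/-- `Omega0 Γ` is the subtype of an open set of `Γ → Bool`. -/
lemma omega0_isOpen :
    IsOpen {c : Γ → Bool | (∃ x, c x = true) ∧ (∃ x, c x = false)} := by
  have h1 : {c : Γ → Bool | ∃ x, c x = true} = ⋃ x, (fun c : Γ → Bool => c x) ⁻¹' {true} := by
    ext c; simp
  have h2 : {c : Γ → Bool | ∃ x, c x = false} = ⋃ x, (fun c : Γ → Bool => c x) ⁻¹' {false} := by
    ext c; simp
  have : {c : Γ → Bool | (∃ x, c x = true) ∧ (∃ x, c x = false)} =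
      {c : Γ → Bool | ∃ x, c x = true} ∩ {c : Γ → Bool | ∃ x, c x = false} := rfl
  rw [this, h1, h2]
  exact (isOpen_iUnion fun x => (continuous_apply x).isOpen_preimage _ (isOpen_discrete _)).inter
    (isOpen_iUnion fun x => (continuous_apply x).isOpen_preimage _ (isOpen_discrete _))

lemma omega0_measurableSpace_eq :
    (instMeasurableSpaceOmega0 Γ) = Subtype.instMeasurableSpace := by
  have := (Subtype.borelSpace
    {c : Γ → Bool | (∃ x, c x = true) ∧ (∃ x, c x = false)}).measurable_eq
  exact this.symm

lemma locallyCompact_omega0 : LocallyCompactSpace (Omega0 Γ) :=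
  (omega0_isOpen (Γ := Γ)).locallyCompactSpace

lemma S0_isOpen (x : Γ) : IsOpen (S0 x : Set (Omega0 Γ)) := by
  have : (S0 x : Set (Omega0 Γ)) =
      Subtype.val ⁻¹' ((fun c : Γ → Bool => c x) ⁻¹' {true}) := rfl
  rw [this]
  exact ((continuous_apply x).comp continuous_subtype_val).isOpen_preimage _ (isOpen_discrete _)

lemma S0_isClosed (x : Γ) : IsClosed (S0 x : Set (Omega0 Γ)) := by
  have : (S0 x : Set (Omega0 Γ)) =
      Subtype.val ⁻¹' ((fun c : Γ → Bool => c x) ⁻¹' {true}) := rfl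
  rw [this]
  exact IsClosed.preimage ((continuous_apply x).comp continuous_subtype_val)
    (isClosed_discrete _)

lemma S0_measurable (x : Γ) : MeasurableSet (S0 x : Set (Omega0 Γ)) :=
  (S0_isOpen x).measurableSet

end Aux

/-- Every measure definite kernel on a countable set is realized by a
regular Borel measure on the universal space `Ω₀`. -/
theorem measure_definite_universal_realization {Γ : Type*} [Countable Γ]
    (f : Γ → Γ → ℝ)
    (Ω : Type*) [MeasurableSpace Ω] (μ : Measure Ω) (S : Γ → Set Ω)
    (hS : ∀ x, MeasurableSet (S x))
    (hf : ∀ x y, μ (S x ∆ S y) = ENNReal.ofReal (f x y)) :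
    ∃ μ₀ : Measure (Omega0 Γ), μ₀.Regular ∧
      ∀ x y, μ₀ (S0 x ∆ S0 y) = ENNReal.ofReal (f x y) := by
  classical
  -- the "good" part of Ω
  set Ω' : Set Ω := {ω | (∃ x, ω ∈ S x) ∧ (∃ x, ω ∉ S x)} with hΩ'def
  have hΩ'meas : MeasurableSet Ω' := by
    have : Ω' = (⋃ x, S x) ∩ (⋃ x, (S x)ᶜ) := by
      ext ω; simp [hΩ'def]
    rw [this]
    exact (MeasurableSet.iUnion fun x => hS x).inter
      (MeasurableSet.iUnion fun x => (hS x).compl)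
  -- the map into Ω₀
  set φ : Ω' → Omega0 Γ := fun ω =>
    ⟨fun x => decide (ω.1 ∈ S x),
      ⟨ω.2.1.choose, by simpa using ω.2.1.choose_spec⟩,
      ⟨ω.2.2.choose, by simpa using ω.2.2.choose_spec⟩⟩ with hφdef
  have hφcoord : ∀ x : Γ, ∀ ω : Ω', (φ ω).1 x = true ↔ ω.1 ∈ S x := by
    intro x ω; simp [hφdef]
  -- measurability of φ
  have hφmeas : Measurable φ := by
    rw [omega0_measurableSpace_eq]
    refine Measurable.subtype_mk ?_
    refine measurable_pi_lambda _ fun x => ?_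
    refine measurable_to_countable' fun b => ?_
    have : (fun ω : Ω' => decide (ω.1 ∈ S x)) ⁻¹' {b} =
        Subtype.val ⁻¹' (if b then S x else (S x)ᶜ) := by
      cases b <;> · ext ω; simp
    rw [this]
    exact measurable_subtype_coe (by cases b <;> simp [hS x, (hS x).compl])
  have hemb : MeasurableEmbedding (Subtype.val : Ω' → Ω) :=
    MeasurableEmbedding.subtype_coe hΩ'meas
  set μ₀ : Measure (Omega0 Γ) := (μ.comap Subtype.val).map φ with hμ₀def
  -- the key computation
  have key : ∀ x y, μ₀ (S0 x ∆ S0 y) = ENNReal.ofReal (f x y) := by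
    intro x y
    have hA : MeasurableSet (S0 x ∆ S0 y : Set (Omega0 Γ)) :=
      (S0_measurable x).symmDiff (S0_measurable y)
    have hpre : φ ⁻¹' (S0 x ∆ S0 y) = Subtype.val ⁻¹' (S x ∆ S y) := by
      have h1 : ∀ z : Γ, φ ⁻¹' (S0 z) = Subtype.val ⁻¹' (S z) := by
        intro z; ext ω
        simpa [S0] using hφcoord z ω
      rw [Set.preimage_symmDiff, Set.preimage_symmDiff, h1, h1]
    have hsub : S x ∆ S y ⊆ Ω' := by
      intro ω hω
      rcases Set.mem_symmDiff.1 hω with ⟨h1, h2⟩ | ⟨h1, h2⟩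
      · exact ⟨⟨x, h1⟩, ⟨y, h2⟩⟩
      · exact ⟨⟨y, h1⟩, ⟨x, h2⟩⟩
    rw [hμ₀def, Measure.map_apply hφmeas hA, hpre, hemb.comap_apply,
      Subtype.image_preimage_coe, Set.inter_eq_right.2 hsub, hf]
  refine ⟨μ₀, ?_, key⟩
  -- regularity
  haveI : LocallyCompactSpace (Omega0 Γ) := locallyCompact_omega0
  haveI : IsLocallyFiniteMeasure μ₀ := by
    constructor
    intro c
    obtain ⟨⟨x, hx⟩, ⟨y, hy⟩⟩ := c.2
    refine ⟨S0 x \ S0 y, ?_, ?_⟩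
    · refine ((S0_isOpen x).inter (S0_isClosed y).isOpen_compl).mem_nhds ⟨hx, fun h => ?_⟩
      rw [S0, Set.mem_setOf_eq, hy] at h
      exact Bool.false_ne_true h
    · calc μ₀ (S0 x \ S0 y) ≤ μ₀ (S0 x ∆ S0 y) :=
            measure_mono (by intro c hc; exact Set.mem_symmDiff.2 (Or.inl hc))
        _ = ENNReal.ofReal (f x y) := key x y
        _ < ⊤ := ENNReal.ofReal_lt_top
  haveI : SecondCountableTopology (Omega0 Γ) :=
    inferInstanceAs (SecondCountableTopology
      ↥{c : Γ → Bool | (∃ x, c x = true) ∧ (∃ x, c x = false)})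
  haveI : TopologicalSpace.PseudoMetrizableSpace (Omega0 Γ) :=
    inferInstanceAs (TopologicalSpace.PseudoMetrizableSpace
      ↥{c : Γ → Bool | (∃ x, c x = true) ∧ (∃ x, c x = false)})
  haveI : SigmaCompactSpace (Omega0 Γ) := inferInstance
  infer_instance
end

section
/- If a Borel measure μ₀ on Ω₀ satisfies μ₀(S⁰_x △ S⁰_y) < ∞ for all x,y ∈ Γ, then μ₀ is finite on every compact subset of Ω₀. -/
open MeasureTheory
open scoped symmDiff

/-- A Borel measure on `Ω₀` which is finite on all symmetric differences
`S⁰_x ∆ S⁰_y` is finite on all compact sets. -/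
theorem finite_on_symmdiffs_implies_finite_on_compacts {Γ : Type*} [Countable Γ]
    (μ : Measure (Omega0 Γ)) (h : ∀ x y : Γ, μ (S0 x ∆ S0 y) ≠ ⊤) :
    ∀ K : Set (Omega0 Γ), IsCompact K → μ K ≠ ⊤ := by
  intro K hK
  set U : Γ × Γ → Set (Omega0 Γ) := fun p => {d | d.1 p.1 = true ∧ d.1 p.2 = false} with hU
  have hopen : ∀ p, IsOpen (U p) := by
    intro p
    have h1 : Continuous fun d : Omega0 Γ => d.1 p.1 :=
      (continuous_apply p.1).comp continuous_subtype_val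
    have h2 : Continuous fun d : Omega0 Γ => d.1 p.2 :=
      (continuous_apply p.2).comp continuous_subtype_val
    have : U p = ((fun d : Omega0 Γ => d.1 p.1) ⁻¹' {true}) ∩
        ((fun d : Omega0 Γ => d.1 p.2) ⁻¹' {false}) := by
      ext d; simp [hU]
    rw [this]
    exact ((isOpen_discrete _).preimage h1).inter ((isOpen_discrete _).preimage h2)
  have hcover : K ⊆ ⋃ p, U p := by
    intro c _
    obtain ⟨⟨x, hx⟩, ⟨y, hy⟩⟩ := c.2
    exact Set.mem_iUnion.2 ⟨(x, y), hx, hy⟩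
  have hsub : ∀ p : Γ × Γ, U p ⊆ S0 p.1 ∆ S0 p.2 := by
    intro p d hd
    exact Or.inl ⟨hd.1, by simp [S0, hd.2]⟩
  obtain ⟨t, ht⟩ := hK.elim_finite_subcover U hopen hcover
  have hle : μ K ≤ ∑ p ∈ t, μ (U p) :=
    (measure_mono ht).trans (measure_biUnion_finset_le t U)
  have hsum : ∑ p ∈ t, μ (U p) ≠ ⊤ := by
    refine (ENNReal.sum_lt_top.2 fun p _ => ?_).ne
    exact lt_of_le_of_lt (measure_mono (hsub p)) (lt_top_iff_ne_top.2 (h p.1 p.2))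
  exact ne_top_of_le_ne_top hsum hle
end

section
/- The class of measure definite kernels on a countable set Γ is closed under pointwise convergence: if each f_j is measure definite and f_j(x,y) → f(x,y) for all x,y ∈ Γ, then f is measure definite. -/
open MeasureTheory
open scoped symmDiff

/-- A kernel is measure definite if it arises as `μ(S_x ∆ S_y)`. -/
def IsMeasureDefinite {Γ : Type*} (f : Γ → Γ → ℝ) : Prop :=
  (∀ x y, 0 ≤ f x y) ∧
  ∃ (Ω : Type) (_ : MeasurableSpace Ω) (μ : Measure Ω) (S : Γ → Set Ω),
    (∀ x, MeasurableSet (S x)) ∧ ∀ x y, μ (S x ∆ S y) = ENNReal.ofReal (f x y)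

open Set Filter TopologicalSpace
open scoped ENNReal NNReal Topology


namespace MDAux

abbrev X : Type := ℕ → Bool

/-- `E` is determined by the coordinates `< n`. -/
def Cyl (n : ℕ) (E : Set X) : Prop :=
  ∀ ω ω' : X, (∀ i, i < n → ω i = ω' i) → ω ∈ E → ω' ∈ E

def IsCyl (E : Set X) : Prop := ∃ n, Cyl n E

lemma Cyl.mono {n m : ℕ} {E : Set X} (h : Cyl n E) (hnm : n ≤ m) : Cyl m E :=
  fun ω ω' hag => h ω ω' (fun i hi => hag i (lt_of_lt_of_le hi hnm))

lemma IsCyl.union {E F : Set X} (hE : IsCyl E) (hF : IsCyl F) : IsCyl (E ∪ F) := by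
  obtain ⟨n, hn⟩ := hE; obtain ⟨m, hm⟩ := hF
  exact ⟨max n m, fun ω ω' hag hω =>
    hω.imp (hn.mono (le_max_left _ _) ω ω' hag) (hm.mono (le_max_right _ _) ω ω' hag)⟩

lemma IsCyl.inter {E F : Set X} (hE : IsCyl E) (hF : IsCyl F) : IsCyl (E ∩ F) := by
  obtain ⟨n, hn⟩ := hE; obtain ⟨m, hm⟩ := hF
  exact ⟨max n m, fun ω ω' hag hω =>
    ⟨hn.mono (le_max_left _ _) ω ω' hag hω.1, hm.mono (le_max_right _ _) ω ω' hag hω.2⟩⟩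

lemma IsCyl.compl {E : Set X} (hE : IsCyl E) : IsCyl Eᶜ := by
  obtain ⟨n, hn⟩ := hE
  exact ⟨n, fun ω ω' hag hω hmem => hω (hn ω' ω (fun i hi => (hag i hi).symm) hmem)⟩

lemma isCyl_univ : IsCyl (univ : Set X) := ⟨0, fun _ _ _ h => h⟩

lemma isCyl_empty : IsCyl (∅ : Set X) := ⟨0, fun _ _ _ h => h⟩

lemma IsCyl.diff {E F : Set X} (hE : IsCyl E) (hF : IsCyl F) : IsCyl (E \ F) :=
  hE.inter hF.compl

lemma IsCyl.symmDiff {E F : Set X} (hE : IsCyl E) (hF : IsCyl F) : IsCyl (E ∆ F) := by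
  rw [Set.symmDiff_def]; exact (hE.diff hF).union (hF.diff hE)

lemma isCyl_coord (i : ℕ) (b : Bool) : IsCyl {ω : X | ω i = b} :=
  ⟨i + 1, fun ω ω' hag hω => by
    have h2 := hag i (Nat.lt_succ_self i)
    show ω' i = b
    rw [← h2]; exact hω⟩

lemma IsCyl.measurableSet {E : Set X} (hE : IsCyl E) : MeasurableSet E := by
  obtain ⟨n, hn⟩ := hE
  let g : X → (Fin n → Bool) := fun ω i => ω i
  have hgm : Measurable g := measurable_pi_lambda _ fun i => measurable_pi_apply _
  have hEeq : E = g ⁻¹' (g '' E) := by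
    refine Subset.antisymm (subset_preimage_image _ _) ?_
    intro ω hω
    obtain ⟨ω', hω', hgg⟩ := hω
    exact hn ω' ω (fun i hi => congrFun hgg ⟨i, hi⟩) hω'
  rw [hEeq]
  exact hgm ((Set.to_countable _).measurableSet)

lemma IsCyl.isOpen {E : Set X} (hE : IsCyl E) : IsOpen E := by
  obtain ⟨n, hn⟩ := hE
  rw [isOpen_iff_mem_nhds]
  intro ω hω
  have hB : (⋂ i ∈ Finset.range n, (fun ω' : X => ω' i) ⁻¹' {ω i}) ∈ 𝓝 ω := by
    refine (Filter.biInter_finset_mem _).2 fun i _ => ?_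
    exact (continuous_apply i).continuousAt.preimage_mem_nhds
      ((isOpen_discrete _).mem_nhds rfl)
  refine mem_of_superset hB fun ω' hω' => ?_
  refine hn ω ω' (fun i hi => ?_) hω
  have := mem_iInter₂.1 hω' i (Finset.mem_range.2 hi)
  exact (mem_singleton_iff.1 this).symm

lemma IsCyl.isClosed {E : Set X} (hE : IsCyl E) : IsClosed E := by
  rw [← isOpen_compl_iff]; exact hE.compl.isOpen

lemma IsCyl.isCompact {E : Set X} (hE : IsCyl E) : IsCompact E :=
  hE.isClosed.isCompact

lemma exists_cyl_nhd {U : Set X} (hU : IsOpen U) {ω : X} (hω : ω ∈ U) :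
    ∃ n, ∀ ω' : X, (∀ i, i < n → ω' i = ω i) → ω' ∈ U := by
  have hnh : U ∈ 𝓝 ω := hU.mem_nhds hω
  rw [nhds_pi, Filter.mem_pi] at hnh
  obtain ⟨I, hIfin, t, ht, hsub⟩ := hnh
  obtain ⟨n, hn⟩ := hIfin.bddAbove
  refine ⟨n + 1, fun ω' hag => hsub ?_⟩
  intro i hi
  rw [hag i (Nat.lt_succ_of_le (hn hi))]
  exact mem_of_mem_nhds (ht i)

lemma isCyl_biUnion {α : Type*} {s : Set α} (hs : s.Finite) {B : α → Set X}
    (h : ∀ a ∈ s, IsCyl (B a)) : IsCyl (⋃ a ∈ s, B a) := by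
  refine Set.Finite.induction_on
    (motive := fun s _ => (∀ a ∈ s, IsCyl (B a)) → IsCyl (⋃ a ∈ s, B a)) s hs ?_ ?_ h
  · intro _; simpa using isCyl_empty
  · intro a s _ _ ih h'
    rw [biUnion_insert]
    exact (h' a (mem_insert _ _)).union (ih fun b hb => h' b (mem_insert_of_mem _ hb))

lemma exists_cyl_separation {K₁ K₂ : Set X} (h₁ : IsCompact K₁) (h₂ : IsClosed K₂)
    (hd : Disjoint K₁ K₂) : ∃ E, IsCyl E ∧ K₁ ⊆ E ∧ Disjoint E K₂ := by
  have key : ∀ ω : X, ∃ B : Set X, IsCyl B ∧ (ω ∈ K₁ → (ω ∈ B ∧ Disjoint B K₂)) := by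
    intro ω
    by_cases hω : ω ∈ K₁
    · obtain ⟨n, hn⟩ := exists_cyl_nhd h₂.isOpen_compl (disjoint_left.1 hd hω)
      refine ⟨{ω' : X | ∀ i, i < n → ω' i = ω i},
        ⟨n, fun a b hab ha i hi => (hab i hi).symm.trans (ha i hi)⟩, fun _ => ⟨?_, ?_⟩⟩
      · exact fun i _ => rfl
      · exact disjoint_left.2 fun a ha => hn a ha
    · exact ⟨∅, isCyl_empty, fun h => absurd h hω⟩
  choose B hBcyl hBspec using key
  obtain ⟨s, hsK, hsfin, hcover⟩ := h₁.elim_finite_subcover_image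
    (fun ω (_ : ω ∈ K₁) => (hBcyl ω).isOpen)
    (fun ω hω => mem_biUnion hω ((hBspec ω hω).1))
  refine ⟨⋃ ω ∈ s, B ω, isCyl_biUnion hsfin fun a _ => hBcyl a, hcover, ?_⟩
  refine disjoint_left.2 fun a ha => ?_
  obtain ⟨ω, hωs, haB⟩ := mem_iUnion₂.1 ha
  exact disjoint_left.1 (hBspec ω (hsK hωs)).2 haB

end MDAux

section Construction

namespace MDAux

/-- first `true` occurs at position `n` -/
def Dn (n : ℕ) : Set X := {ω | ω n = true ∧ ∀ i, i < n → ω i = false}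

/-- some `true` among the first `N` coordinates -/
def Pn (N : ℕ) : Set X := {ω | ∃ i, i < N ∧ ω i = true}

lemma isCyl_Dn (n : ℕ) : IsCyl (Dn n) := by
  refine ⟨n + 1, fun ω ω' hag hω => ⟨?_, fun i hi => ?_⟩⟩
  · rw [← hag n (Nat.lt_succ_self n)]; exact hω.1
  · rw [← hag i (hi.trans (Nat.lt_succ_self n))]; exact hω.2 i hi

lemma isCyl_Pn (N : ℕ) : IsCyl (Pn N) :=
  ⟨N, fun ω ω' hag => fun ⟨i, hi, ht⟩ => ⟨i, hi, (hag i hi) ▸ ht⟩⟩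

lemma Dn_subset (n : ℕ) : Dn n ⊆ {ω : X | ω n = true} := fun _ h => h.1

lemma Dn_disjoint {n m : ℕ} (h : n ≠ m) : Disjoint (Dn n) (Dn m) := by
  rcases h.lt_or_gt with h' | h'
  · exact Set.disjoint_left.2 fun ω hn hm => by
      have := hm.2 n h'; rw [hn.1] at this; exact Bool.noConfusion this
  · exact Set.disjoint_left.2 fun ω hn hm => by
      have := hn.2 m h'; rw [hm.1] at this; exact Bool.noConfusion this

lemma Pn_zero : Pn 0 = ∅ := by
  ext ω; simp [Pn]

lemma Pn_succ (N : ℕ) : Pn (N + 1) = Pn N ∪ Dn N := by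
  ext ω
  constructor
  · rintro ⟨i, hi, ht⟩
    by_cases hP : ω ∈ Pn N
    · exact Or.inl hP
    · have hfalse : ∀ j, j < N → ω j = false := by
        intro j hj
        rcases Bool.eq_false_or_eq_true (ω j) with h | h
        · exact absurd ⟨j, hj, h⟩ hP
        · exact h
      rcases Nat.lt_succ_iff_lt_or_eq.1 hi with h | h
      · exact absurd ⟨i, h, ht⟩ hP
      · exact Or.inr ⟨h ▸ ht, hfalse⟩
  · rintro (⟨i, hi, ht⟩ | ⟨ht, _⟩)
    · exact ⟨i, hi.trans (Nat.lt_succ_self N), ht⟩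
    · exact ⟨N, Nat.lt_succ_self N, ht⟩

lemma disjoint_Pn_Dn (N : ℕ) : Disjoint (Pn N) (Dn N) :=
  Set.disjoint_left.2 fun ω ⟨i, hi, ht⟩ hD => by
    have := hD.2 i hi; rw [ht] at this; exact Bool.noConfusion this

lemma Pn_mono {N M : ℕ} (h : N ≤ M) : Pn N ⊆ Pn M :=
  fun ω ⟨i, hi, ht⟩ => ⟨i, lt_of_lt_of_le hi h, ht⟩

lemma cyl_subset_Pn {B : Set X} {n : ℕ} (hB : Cyl n B) (h0 : (fun _ => false) ∉ B) :
    B ⊆ Pn n := by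
  intro ω hω
  by_contra hP
  have hfalse : ∀ j, j < n → ω j = false := by
    intro j hj
    rcases Bool.eq_false_or_eq_true (ω j) with h | h
    · exact absurd ⟨j, hj, h⟩ hP
    · exact h
  exact h0 (hB ω (fun _ => false) (fun i hi => hfalse i hi) hω)

variable (L : Set X → ℝ≥0∞)

noncomputable def lamE (n : ℕ) (K : Set X) : ℝ≥0∞ :=
  ⨅ E : {E : Set X // IsCyl E ∧ K ⊆ E}, L (↑E ∩ Dn n)

lemma lamE_le {n : ℕ} {K E : Set X} (hE : IsCyl E) (hKE : K ⊆ E) :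
    lamE L n K ≤ L (E ∩ Dn n) :=
  iInf_le _ (⟨E, hE, hKE⟩ : {E : Set X // IsCyl E ∧ K ⊆ E})

lemma le_lamE {n : ℕ} {K : Set X} {c : ℝ≥0∞}
    (h : ∀ E, IsCyl E → K ⊆ E → c ≤ L (E ∩ Dn n)) : c ≤ lamE L n K :=
  le_iInf fun E => h E.1 E.2.1 E.2.2

lemma lamE_mono {n : ℕ} {K₁ K₂ : Set X} (h : K₁ ⊆ K₂) : lamE L n K₁ ≤ lamE L n K₂ :=
  le_lamE L fun E hE hKE => lamE_le L hE (h.trans hKE)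

variable {L}

lemma lamE_ne_top (hmono : ∀ A B : Set X, A ⊆ B → L A ≤ L B)
    (hfin : ∀ i : ℕ, L {ω : X | ω i = true} ≠ ⊤) (n : ℕ) (K : Set X) :
    lamE L n K ≠ ⊤ := by
  have h1 : lamE L n K ≤ L {ω : X | ω n = true} := by
    refine (lamE_le L isCyl_univ (Set.subset_univ K)).trans ?_
    rw [Set.univ_inter]; exact hmono _ _ (Dn_subset n)
  exact ne_top_of_le_ne_top (hfin n) h1

lemma lamE_union_le (hsub : ∀ A B : Set X, L (A ∪ B) ≤ L A + L B) (n : ℕ) (K₁ K₂ : Set X) :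
    lamE L n (K₁ ∪ K₂) ≤ lamE L n K₁ + lamE L n K₂ := by
  have hrw : lamE L n K₁ + lamE L n K₂ = ⨅ E₁ : {E : Set X // IsCyl E ∧ K₁ ⊆ E},
      ⨅ E₂ : {E : Set X // IsCyl E ∧ K₂ ⊆ E}, (L (↑E₁ ∩ Dn n) + L (↑E₂ ∩ Dn n)) := by
    rw [lamE, lamE, ENNReal.iInf_add]
    exact iInf_congr fun E₁ => ENNReal.add_iInf
  rw [hrw]
  refine le_iInf fun E₁ => le_iInf fun E₂ => ?_
  calc lamE L n (K₁ ∪ K₂) ≤ L ((↑E₁ ∪ ↑E₂) ∩ Dn n) :=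
        lamE_le L (E₁.2.1.union E₂.2.1) (Set.union_subset_union E₁.2.2 E₂.2.2)
    _ ≤ L (↑E₁ ∩ Dn n) + L (↑E₂ ∩ Dn n) := by
        rw [Set.union_inter_distrib_right]; exact hsub _ _

lemma lamE_union_disjoint
    (hadd : ∀ A B : Set X, MeasurableSet A → MeasurableSet B → Disjoint A B →
      L (A ∪ B) = L A + L B)
    (hsub : ∀ A B : Set X, L (A ∪ B) ≤ L A + L B)
    (n : ℕ) {K₁ K₂ : Set X} (h₁ : IsCompact K₁) (h₂ : IsClosed K₂) (hd : Disjoint K₁ K₂) :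
    lamE L n (K₁ ∪ K₂) = lamE L n K₁ + lamE L n K₂ := by
  refine le_antisymm (lamE_union_le hsub n K₁ K₂) ?_
  obtain ⟨E₀, hE₀cyl, hKE₀, hE₀disj⟩ := exists_cyl_separation h₁ h₂ hd
  refine le_lamE L fun E hE hKE => ?_
  have hsubK₁ : K₁ ⊆ E ∩ E₀ :=
    Set.subset_inter ((Set.subset_union_left).trans hKE) hKE₀
  have hsubK₂ : K₂ ⊆ E ∩ E₀ᶜ :=
    Set.subset_inter ((Set.subset_union_right).trans hKE)
      (fun a ha hmem => Set.disjoint_left.1 hE₀disj hmem ha)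
  have key : L (E ∩ Dn n) = L ((E ∩ E₀) ∩ Dn n) + L ((E ∩ E₀ᶜ) ∩ Dn n) := by
    rw [← hadd _ _ (((hE.inter hE₀cyl).inter (isCyl_Dn n)).measurableSet)
      (((hE.inter hE₀cyl.compl).inter (isCyl_Dn n)).measurableSet)
      (Disjoint.mono (Set.inter_subset_left.trans Set.inter_subset_right)
        (Set.inter_subset_left.trans Set.inter_subset_right) disjoint_compl_right)]
    congr 1
    rw [← Set.union_inter_distrib_right, ← Set.inter_union_distrib_left,
      Set.union_compl_self, Set.inter_univ]
  rw [key]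
  exact add_le_add (lamE_le L (hE.inter hE₀cyl) hsubK₁)
    (lamE_le L (hE.inter hE₀cyl.compl) hsubK₂)

end MDAux

end Construction

namespace MDAux

variable {L : Set X → ℝ≥0∞}

noncomputable def contentOf
    (hmono : ∀ A B : Set X, A ⊆ B → L A ≤ L B)
    (hadd : ∀ A B : Set X, MeasurableSet A → MeasurableSet B → Disjoint A B →
      L (A ∪ B) = L A + L B)
    (hsub : ∀ A B : Set X, L (A ∪ B) ≤ L A + L B)
    (hfin : ∀ i : ℕ, L {ω : X | ω i = true} ≠ ⊤) (n : ℕ) : Content X where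
  toFun K := (lamE L n K).toNNReal
  mono' K₁ K₂ h := ENNReal.toNNReal_mono (lamE_ne_top hmono hfin n K₂) (lamE_mono L h)
  sup_disjoint' K₁ K₂ hd h₁ h₂ := by
    have key : lamE L n ((K₁ : Set X) ∪ (K₂ : Set X))
        = lamE L n (K₁ : Set X) + lamE L n (K₂ : Set X) :=
      lamE_union_disjoint hadd hsub n K₁.2 h₂ hd
    show (lamE L n ((K₁ ⊔ K₂ : TopologicalSpace.Compacts X) : Set X)).toNNReal = _
    rw [TopologicalSpace.Compacts.coe_sup, key,
      ENNReal.toNNReal_add (lamE_ne_top hmono hfin n K₁) (lamE_ne_top hmono hfin n K₂)]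
  sup_le' K₁ K₂ := by
    show (lamE L n ((K₁ ⊔ K₂ : TopologicalSpace.Compacts X) : Set X)).toNNReal ≤ _
    rw [← ENNReal.toNNReal_add (lamE_ne_top hmono hfin n K₁) (lamE_ne_top hmono hfin n K₂)]
    refine ENNReal.toNNReal_mono ?_ ?_
    · exact ENNReal.add_ne_top.2 ⟨lamE_ne_top hmono hfin n K₁, lamE_ne_top hmono hfin n K₂⟩
    · rw [TopologicalSpace.Compacts.coe_sup]
      exact lamE_union_le hsub n _ _

lemma contentOf_measure_eq
    (hmono : ∀ A B : Set X, A ⊆ B → L A ≤ L B)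
    (hadd : ∀ A B : Set X, MeasurableSet A → MeasurableSet B → Disjoint A B →
      L (A ∪ B) = L A + L B)
    (hsub : ∀ A B : Set X, L (A ∪ B) ≤ L A + L B)
    (hfin : ∀ i : ℕ, L {ω : X | ω i = true} ≠ ⊤) (n : ℕ) {B : Set X} (hB : IsCyl B) :
    (contentOf hmono hadd hsub hfin n).measure B = L (B ∩ Dn n) := by
  have hBm := hB.measurableSet
  have hBo := hB.isOpen
  have hBc := hB.isCompact
  rw [Content.measure_apply _ hBm,
    (contentOf hmono hadd hsub hfin n).outerMeasure_of_isOpen B hBo,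
    (contentOf hmono hadd hsub hfin n).innerContent_of_isCompact hBc hBo]
  show ((lamE L n B).toNNReal : ℝ≥0∞) = L (B ∩ Dn n)
  rw [ENNReal.coe_toNNReal (lamE_ne_top hmono hfin n B)]
  refine le_antisymm (lamE_le L hB Set.Subset.rfl)
    (le_lamE L fun E hE hBE => hmono _ _ (Set.inter_subset_inter_left _ hBE))

theorem exists_measure_of_cyl
    (hmono : ∀ A B : Set X, A ⊆ B → L A ≤ L B)
    (hadd : ∀ A B : Set X, MeasurableSet A → MeasurableSet B → Disjoint A B →
      L (A ∪ B) = L A + L B)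
    (hsub : ∀ A B : Set X, L (A ∪ B) ≤ L A + L B)
    (hfin : ∀ i : ℕ, L {ω : X | ω i = true} ≠ ⊤) :
    ∃ μ : Measure X, ∀ B : Set X, IsCyl B → (fun _ => false) ∉ B → μ B = L B := by
  refine ⟨Measure.sum (fun n => (contentOf hmono hadd hsub hfin n).measure),
    fun B hB h0 => ?_⟩
  obtain ⟨n₀, hn₀⟩ := id hB
  have hBm := hB.measurableSet
  rw [Measure.sum_apply _ hBm]
  have hval : ∀ n, (contentOf hmono hadd hsub hfin n).measure B = L (B ∩ Dn n) :=
    fun n => contentOf_measure_eq hmono hadd hsub hfin n hB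
  have hL0 : L ∅ = 0 := by
    have h' := hadd ∅ ∅ MeasurableSet.empty MeasurableSet.empty disjoint_bot_left
    rw [Set.union_empty] at h'
    have hne : L ∅ ≠ ⊤ := ne_top_of_le_ne_top (hfin 0) (hmono _ _ (Set.empty_subset _))
    exact ((ENNReal.add_right_inj hne).1 (by rw [add_zero]; exact h')).symm
  have hpartial : ∀ N, (∑ n ∈ Finset.range N, L (B ∩ Dn n)) = L (B ∩ Pn N) := by
    intro N
    induction N with
    | zero => simp [Pn_zero, hL0]
    | succ N ih =>
      rw [Finset.sum_range_succ, ih, Pn_succ, Set.inter_union_distrib_left,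
        hadd _ _ (hBm.inter (isCyl_Pn N).measurableSet) (hBm.inter (isCyl_Dn N).measurableSet)
          (Disjoint.mono Set.inter_subset_right Set.inter_subset_right (disjoint_Pn_Dn N))]
  have hBP : B ∩ Pn n₀ = B := Set.inter_eq_left.2 (cyl_subset_Pn hn₀ h0)
  calc (∑' n, (contentOf hmono hadd hsub hfin n).measure B)
      = ∑' n, L (B ∩ Dn n) := tsum_congr hval
    _ = ⨆ N, ∑ n ∈ Finset.range N, L (B ∩ Dn n) := ENNReal.tsum_eq_iSup_nat
    _ = L B := by
        refine le_antisymm (iSup_le fun N => ?_) (le_iSup_of_le n₀ ?_)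
        · rw [hpartial]; exact hmono _ _ Set.inter_subset_left
        · rw [hpartial, hBP]

end MDAux

namespace MDAux

lemma symmDiff_helper {α : Type*} (A B C : Set α) : (A ∆ C) ∆ (B ∆ C) = A ∆ B := by
  rw [symmDiff_comm B C, symmDiff_assoc, symmDiff_symmDiff_cancel_left]

noncomputable def ulim (U : Ultrafilter ℕ) (a : ℕ → ℝ≥0∞) : ℝ≥0∞ := (U.map a).lim

lemma tendsto_ulim (U : Ultrafilter ℕ) (a : ℕ → ℝ≥0∞) : Tendsto a U (𝓝 (ulim U a)) :=
  (U.map a).le_nhds_lim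

lemma ulim_eq {U : Ultrafilter ℕ} {a : ℕ → ℝ≥0∞} {x : ℝ≥0∞} (h : Tendsto a U (𝓝 x)) :
    ulim U a = x := tendsto_nhds_unique (tendsto_ulim U a) h

lemma ulim_le {U : Ultrafilter ℕ} {a b : ℕ → ℝ≥0∞} (h : ∀ j, a j ≤ b j) :
    ulim U a ≤ ulim U b := le_of_tendsto_of_tendsto' (tendsto_ulim U a) (tendsto_ulim U b) h

lemma ulim_add {U : Ultrafilter ℕ} (a b : ℕ → ℝ≥0∞) :
    ulim U (fun j => a j + b j) = ulim U a + ulim U b :=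
  ulim_eq ((tendsto_ulim U a).add (tendsto_ulim U b))

end MDAux

/-- Measure definite kernels on a countable set are closed under
pointwise convergence. -/
theorem measure_definite_closed_under_pointwise_limits {Γ : Type*} [Countable Γ]
    (f : ℕ → Γ → Γ → ℝ) (f₀ : Γ → Γ → ℝ)
    (hmd : ∀ j, IsMeasureDefinite (f j))
    (hconv : ∀ x y, Filter.Tendsto (fun j => f j x y) Filter.atTop (nhds (f₀ x y))) :
    IsMeasureDefinite f₀ := by
  classical
  constructor
  · intro x y
    exact ge_of_tendsto (hconv x y) (Filter.Eventually.of_forall fun j => (hmd j).1 x y)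
  rcases isEmpty_or_nonempty Γ with hΓ | hΓ
  · exact ⟨PUnit, inferInstance, 0, fun _ => ∅, fun x => (hΓ.false x).elim,
      fun x => (hΓ.false x).elim⟩
  obtain ⟨x₀⟩ := hΓ
  haveI : Nonempty Γ := ⟨x₀⟩
  obtain ⟨g, hg⟩ := exists_surjective_nat Γ
  choose ix hixspec using hg
  have key : ∀ j : ℕ, ∃ ν : Measure MDAux.X,
      (∀ x y : Γ, ν ({ω : MDAux.X | ω (ix x) = true} ∆ {ω : MDAux.X | ω (ix y) = true})
        = ENNReal.ofReal (f j x y)) ∧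
      (∀ i : ℕ, ν {ω : MDAux.X | ω i = true} = ENNReal.ofReal (f j (g i) x₀)) := by
    intro j
    obtain ⟨Ω, mΩ, μ, S, hS, hμS⟩ := (hmd j).2
    have hS' : ∀ x : Γ, MeasurableSet (S x ∆ S x₀) := fun x => (hS x).symmDiff (hS x₀)
    have hφ : Measurable (fun ω : Ω => fun i : ℕ => decide (ω ∈ S (g i) ∆ S x₀)) := by
      refine measurable_pi_lambda _ fun i => measurable_to_countable' fun b => ?_
      cases b
      · have hset : (fun ω : Ω => decide (ω ∈ S (g i) ∆ S x₀)) ⁻¹' {false}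
            = (S (g i) ∆ S x₀)ᶜ := by
          ext ω
          simp only [Set.mem_preimage, Set.mem_singleton_iff, decide_eq_false_iff_not,
            Set.mem_compl_iff]
        rw [hset]; exact (hS' (g i)).compl
      · have hset : (fun ω : Ω => decide (ω ∈ S (g i) ∆ S x₀)) ⁻¹' {true}
            = S (g i) ∆ S x₀ := by
          ext ω
          simp only [Set.mem_preimage, Set.mem_singleton_iff, decide_eq_true_eq]
        rw [hset]; exact hS' (g i)
    refine ⟨Measure.map (fun ω : Ω => fun i : ℕ => decide (ω ∈ S (g i) ∆ S x₀)) μ, ?_, ?_⟩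
    · intro x y
      rw [Measure.map_apply hφ
        (((MDAux.isCyl_coord _ true).symmDiff (MDAux.isCyl_coord _ true)).measurableSet)]
      have hpre : (fun ω : Ω => fun i : ℕ => decide (ω ∈ S (g i) ∆ S x₀)) ⁻¹'
          ({ω : MDAux.X | ω (ix x) = true} ∆ {ω : MDAux.X | ω (ix y) = true})
          = (S x ∆ S x₀) ∆ (S y ∆ S x₀) := by
        rw [Set.preimage_symmDiff]
        congr 1
        · ext ω; simp [hixspec]
        · ext ω; simp [hixspec]
      rw [hpre, MDAux.symmDiff_helper]
      exact hμS x y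
    · intro i
      rw [Measure.map_apply hφ ((MDAux.isCyl_coord i true).measurableSet)]
      have hpre : (fun ω : Ω => fun i : ℕ => decide (ω ∈ S (g i) ∆ S x₀)) ⁻¹'
          {ω : MDAux.X | ω i = true} = S (g i) ∆ S x₀ := by
        ext ω; simp
      rw [hpre]
      exact hμS (g i) x₀
  choose ν hν1 hν2 using key
  set U : Ultrafilter ℕ := Ultrafilter.of Filter.atTop with hU
  have hUle : (U : Filter ℕ) ≤ Filter.atTop := Ultrafilter.of_le Filter.atTop
  have hmono : ∀ A B : Set MDAux.X, A ⊆ B →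
      MDAux.ulim U (fun j => ν j A) ≤ MDAux.ulim U (fun j => ν j B) :=
    fun A B h => MDAux.ulim_le fun j => measure_mono h
  have hadd : ∀ A B : Set MDAux.X, MeasurableSet A → MeasurableSet B → Disjoint A B →
      MDAux.ulim U (fun j => ν j (A ∪ B))
        = MDAux.ulim U (fun j => ν j A) + MDAux.ulim U (fun j => ν j B) := by
    intro A B hA hB hd
    have h1 : (fun j => ν j (A ∪ B)) = fun j => ν j A + ν j B :=
      funext fun j => measure_union hd hB
    rw [h1, MDAux.ulim_add]
  have hsub : ∀ A B : Set MDAux.X,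
      MDAux.ulim U (fun j => ν j (A ∪ B))
        ≤ MDAux.ulim U (fun j => ν j A) + MDAux.ulim U (fun j => ν j B) :=
    fun A B => (MDAux.ulim_le fun j => measure_union_le A B).trans
      (le_of_eq (MDAux.ulim_add _ _))
  have hfin : ∀ i : ℕ, MDAux.ulim U (fun j => ν j {ω : MDAux.X | ω i = true}) ≠ ⊤ := by
    intro i
    have h2 : Filter.Tendsto (fun j => ENNReal.ofReal (f j (g i) x₀)) Filter.atTop
        (𝓝 (ENNReal.ofReal (f₀ (g i) x₀))) := ENNReal.tendsto_ofReal (hconv _ _)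
    have h3 := (h2.mono_left hUle).congr fun j => (hν2 j i).symm
    rw [MDAux.ulim_eq h3]
    exact ENNReal.ofReal_ne_top
  obtain ⟨μfin, hμfin⟩ := MDAux.exists_measure_of_cyl
    (L := fun A => MDAux.ulim U (fun j => ν j A)) hmono hadd hsub hfin
  refine ⟨MDAux.X, inferInstance, μfin, fun x => {ω : MDAux.X | ω (ix x) = true},
    fun x => (MDAux.isCyl_coord _ true).measurableSet, fun x y => ?_⟩
  have hcyl : MDAux.IsCyl ({ω : MDAux.X | ω (ix x) = true} ∆ {ω : MDAux.X | ω (ix y) = true}) :=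
    (MDAux.isCyl_coord _ true).symmDiff (MDAux.isCyl_coord _ true)
  have h0 : (fun _ => false) ∉
      ({ω : MDAux.X | ω (ix x) = true} ∆ {ω : MDAux.X | ω (ix y) = true}) := by
    simp [Set.mem_symmDiff]
  rw [hμfin _ hcyl h0]
  refine MDAux.ulim_eq ?_
  have h2 : Filter.Tendsto (fun j => ENNReal.ofReal (f j x y)) Filter.atTop
      (𝓝 (ENNReal.ofReal (f₀ x y))) := ENNReal.tendsto_ofReal (hconv x y)
  exact (h2.mono_left hUle).congr fun j => (hν1 j x y).symm
end

section
/- On the space Ω of half-spaces of a finite-dimensional real Hilbert space ℋ, there is a Borel measure μ, invariant under the group of rigid motions of ℋ, normalized so that μ{M ∈ Ω : v ∈ M, w ∉ M} = ‖v − w‖ for all v, w ∈ ℋ. -/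
open MeasureTheory
open scoped RealInnerProductSpace ENNReal

/-- The space of (closed affine) half-spaces of a real inner product space. -/
def HalfSpaces (H : Type*) [NormedAddCommGroup H] [InnerProductSpace ℝ H] : Type _ :=
  {M : Set H // ∃ (ξ : H) (t : ℝ), ‖ξ‖ = 1 ∧ M = {u | t ≤ ⟪u, ξ⟫}}

open Set Metric
open scoped Classical

namespace HSAux

variable {H : Type*} [NormedAddCommGroup H] [InnerProductSpace ℝ H]

/-- the half-space set with normal `ξ` and offset `t`. -/
def hsSet (ξ : H) (t : ℝ) : Set H := {u | t ≤ ⟪u, ξ⟫}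

lemma hsSet_inj {ξ η : H} {t s : ℝ} (hξ : ‖ξ‖ = 1) (hη : ‖η‖ = 1)
    (h : hsSet ξ t = hsSet η s) : ξ = η ∧ t = s := by
  have key : ∀ u : H, t ≤ ⟪u, ξ⟫ ↔ s ≤ ⟪u, η⟫ := fun u => Set.ext_iff.1 h u
  have hξη : ξ = η := by
    by_contra hne
    have hsq : 0 < ‖ξ - η‖ ^ 2 := by
      have hne' : ξ - η ≠ 0 := sub_ne_zero_of_ne hne
      have := norm_pos_iff.2 hne'
      positivity
    have hlt : ⟪ξ, η⟫ < 1 := by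
      have hexp : ‖ξ - η‖ ^ 2 = ‖ξ‖ ^ 2 - 2 * ⟪ξ, η⟫ + ‖η‖ ^ 2 := norm_sub_sq_real ξ η
      rw [hξ, hη] at hexp
      nlinarith
    set d : ℝ := 1 - ⟪ξ, η⟫ with hd
    have hd0 : 0 < d := by linarith
    set r : ℝ := (max |t| |s| + 1) / d with hr
    have hrd : r * d = max |t| |s| + 1 := div_mul_cancel₀ _ hd0.ne'
    have h1 : ⟪r • (ξ - η), ξ⟫ = r * d := by
      rw [real_inner_smul_left, inner_sub_left, real_inner_self_eq_norm_sq, hξ]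
      rw [hd, real_inner_comm ξ η]; ring
    have h2 : ⟪r • (ξ - η), η⟫ = -(r * d) := by
      rw [real_inner_smul_left, inner_sub_left, real_inner_self_eq_norm_sq, hη]
      rw [hd]; ring
    have := (key (r • (ξ - η))).1 (by
      rw [h1, hrd]
      calc t ≤ |t| := le_abs_self t
        _ ≤ max |t| |s| := le_max_left _ _
        _ ≤ _ := by linarith)
    rw [h2, hrd] at this
    have habs : -(max |t| |s| + 1) < s := by
      have : |s| ≤ max |t| |s| := le_max_right _ _
      have := neg_abs_le s
      linarith
    linarith
  subst hξη
  have h1 : s ≤ t := by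
    have := (key (t • ξ)).1 (by
      rw [real_inner_smul_left, real_inner_self_eq_norm_sq, hξ]; simp)
    rwa [real_inner_smul_left, real_inner_self_eq_norm_sq, hξ, one_pow, mul_one] at this
  have h2 : t ≤ s := by
    have := (key (s • ξ)).2 (by
      rw [real_inner_smul_left, real_inner_self_eq_norm_sq, hξ]; simp)
    rwa [real_inner_smul_left, real_inner_self_eq_norm_sq, hξ, one_pow, mul_one] at this
  exact ⟨rfl, le_antisymm h2 h1⟩

end HSAux

-- ================= parametrization =================
namespace HSAux

variable {H : Type*} [NormedAddCommGroup H] [InnerProductSpace ℝ H]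

def Efun : sphere (0 : H) 1 × ℝ → HalfSpaces H := fun p =>
  ⟨hsSet p.1.1 p.2, p.1.1, p.2, mem_sphere_zero_iff_norm.1 p.1.2, rfl⟩

lemma Efun_bijective : Function.Bijective (Efun (H := H)) := by
  constructor
  · rintro ⟨ξ, t⟩ ⟨η, s⟩ h
    obtain ⟨h1, h2⟩ := hsSet_inj (mem_sphere_zero_iff_norm.1 ξ.2)
      (mem_sphere_zero_iff_norm.1 η.2) (congrArg Subtype.val h)
    exact Prod.ext (Subtype.ext h1) h2
  · rintro ⟨s, ξ, t, h1, h2⟩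
    exact ⟨(⟨ξ, mem_sphere_zero_iff_norm.2 h1⟩, t), Subtype.ext h2.symm⟩

/-- sphere map induced by a linear isometry equivalence -/
def sphMap (L : H ≃ₗᵢ[ℝ] H) : sphere (0 : H) 1 → sphere (0 : H) 1 := fun ξ =>
  ⟨L ξ.1, by
    rw [mem_sphere_zero_iff_norm, L.norm_map]
    exact mem_sphere_zero_iff_norm.1 ξ.2⟩

lemma continuous_sphMap (L : H ≃ₗᵢ[ℝ] H) : Continuous (sphMap L) :=
  Continuous.subtype_mk (L.continuous.comp continuous_subtype_val) _

end HSAux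

namespace HSAux

variable {H : Type*} [NormedAddCommGroup H] [InnerProductSpace ℝ H]
  [FiniteDimensional ℝ H] [MeasurableSpace H] [BorelSpace H]

/-- annulus 1 ≤ ‖x‖ ≤ 2 -/
def ann (H : Type*) [NormedAddCommGroup H] [InnerProductSpace ℝ H] : Set H :=
  Metric.closedBall 0 2 \ Metric.ball 0 1

lemma ann_meas : MeasurableSet (ann H) :=
  measurableSet_closedBall.diff measurableSet_ball

lemma mem_ann_iff {x : H} : x ∈ ann H ↔ 1 ≤ ‖x‖ ∧ ‖x‖ ≤ 2 := by
  simp [ann, mem_closedBall_zero_iff, mem_ball_zero_iff, not_lt, and_comm]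

section WithE

variable (e : H) (he : ‖e‖ = 1)

/-- normalization map into the sphere (sending 0 to e). -/
noncomputable def nSval (x : H) : H := if x = 0 then e else ‖x‖⁻¹ • x

include he

lemma nSval_mem (x : H) : nSval e x ∈ sphere (0 : H) 1 := by
  rw [mem_sphere_zero_iff_norm, nSval]
  split_ifs with h
  · exact he
  · rw [norm_smul, norm_inv, norm_norm, inv_mul_cancel₀ (norm_ne_zero_iff.2 h)]

noncomputable def nS (x : H) : sphere (0 : H) 1 := ⟨nSval e x, nSval_mem e he x⟩

lemma measurable_nS : Measurable (nS e he) := by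
  apply Measurable.subtype_mk
  apply Measurable.ite (by simp [Set.setOf_eq_eq_singleton]) measurable_const
  exact (measurable_norm.inv).smul measurable_id

omit he in
lemma nSval_of_ne {x : H} (hx : x ≠ 0) : nSval e x = ‖x‖⁻¹ • x := if_neg hx

/-- the sphere measure -/
noncomputable def sphMeas : Measure (sphere (0 : H) 1) :=
  Measure.map (nS e he) (volume.restrict (ann H))

lemma sphMeas_univ_lt_top : sphMeas e he Set.univ < ⊤ := by
  rw [sphMeas, Measure.map_apply (measurable_nS e he) MeasurableSet.univ]
  refine lt_of_le_of_lt ?_ (measure_closedBall_lt_top (μ := (volume : Measure H)) (x := (0:H)) (r := 2))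
  rw [Set.preimage_univ, Measure.restrict_apply MeasurableSet.univ, Set.univ_inter]
  exact measure_mono diff_subset

instance : IsFiniteMeasure (sphMeas e he) := ⟨sphMeas_univ_lt_top e he⟩

/-- invariance of the sphere measure under linear isometries -/
lemma sphMeas_map (L : H ≃ₗᵢ[ℝ] H) :
    Measure.map (sphMap L) (sphMeas e he) = sphMeas e he := by
  rw [sphMeas, Measure.map_map (continuous_sphMap L).measurable (measurable_nS e he)]
  have hae : (sphMap L ∘ nS e he) =ᵐ[volume.restrict (ann H)] (nS e he ∘ ⇑L) := by
    filter_upwards [ae_restrict_mem ann_meas] with x hx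
    have hx0 : x ≠ 0 := by
      intro h; rw [h] at hx; simp [mem_ann_iff] at hx; linarith
    have hLx0 : L x ≠ 0 := fun h => hx0 (by simpa using congrArg L.symm h)
    simp only [Function.comp_apply, sphMap, nS]
    ext
    simp only [nSval_of_ne e hx0, nSval_of_ne e hLx0]
    rw [L.map_smul, L.norm_map]
  rw [Measure.map_congr hae,
    ← Measure.map_map (measurable_nS e he) L.continuous.measurable]
  congr 1
  have hpre : ⇑L ⁻¹' ann H = ann H := by
    ext x; simp [mem_ann_iff, L.norm_map]
  calc Measure.map (⇑L) (volume.restrict (ann H))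
      = Measure.map (⇑L) (volume.restrict (⇑L ⁻¹' ann H)) := by rw [hpre]
    _ = (Measure.map (⇑L) volume).restrict (ann H) :=
        (Measure.restrict_map L.continuous.measurable ann_meas).symm
    _ = volume.restrict (ann H) := by rw [L.measurePreserving.map_eq]

/-- the key integral -/
noncomputable def gfun (y : H) : ℝ≥0∞ :=
  ∫⁻ ξ, ENNReal.ofReal ⟪y, (ξ : H)⟫ ∂(sphMeas e he)

omit he in
lemma measurable_ginteg (y : H) :
    Measurable fun ξ : sphere (0 : H) 1 => ENNReal.ofReal ⟪y, (ξ : H)⟫ :=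
  ENNReal.measurable_ofReal.comp
    ((Continuous.inner continuous_const continuous_subtype_val).measurable)

lemma gfun_map (L : H ≃ₗᵢ[ℝ] H) (y : H) : gfun e he (L y) = gfun e he y := by
  unfold gfun
  conv_lhs => rw [← sphMeas_map e he L]
  rw [lintegral_map (measurable_ginteg (L y)) (continuous_sphMap L).measurable]
  congr 1
  ext ξ
  simp only [sphMap]
  rw [L.inner_map_map]

lemma gfun_smul (c : ℝ) (hc : 0 ≤ c) (y : H) :
    gfun e he (c • y) = ENNReal.ofReal c * gfun e he y := by
  unfold gfun
  rw [← lintegral_const_mul _ (measurable_ginteg y)]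
  congr 1; ext ξ
  rw [real_inner_smul_left, ENNReal.ofReal_mul hc]

lemma gfun_norm (y : H) : gfun e he y = ENNReal.ofReal ‖y‖ * gfun e he e := by
  rcases eq_or_ne y 0 with rfl | hy
  · simp only [gfun, inner_zero_left, ENNReal.ofReal_zero, lintegral_zero, norm_zero,
      zero_mul]
  · set u : H := ‖y‖⁻¹ • y with hu
    have hu1 : ‖u‖ = 1 := by
      rw [hu, norm_smul, norm_inv, norm_norm, inv_mul_cancel₀ (norm_ne_zero_iff.2 hy)]
    have hyu : y = ‖y‖ • u := by
      rw [hu, smul_smul, mul_inv_cancel₀ (norm_ne_zero_iff.2 hy), one_smul]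
    have hLe : Submodule.reflection (ℝ ∙ (e - u))ᗮ e = u := Submodule.reflection_sub (by rw [he, hu1])
    calc gfun e he y = gfun e he (‖y‖ • u) := by rw [← hyu]
      _ = ENNReal.ofReal ‖y‖ * gfun e he u := gfun_smul e he _ (norm_nonneg y) u
      _ = ENNReal.ofReal ‖y‖ * gfun e he e := by
          rw [← hLe, gfun_map]

end WithE
end HSAux

namespace HSAux

variable {H : Type*} [NormedAddCommGroup H] [InnerProductSpace ℝ H]
  [FiniteDimensional ℝ H] [MeasurableSpace H] [BorelSpace H]

variable (e : H) (he : ‖e‖ = 1)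
include he

lemma gfun_lt_top : gfun e he e < ⊤ := by
  have hle : gfun e he e ≤ sphMeas e he Set.univ := by
    rw [gfun, ← lintegral_one]
    refine lintegral_mono fun ξ => ENNReal.ofReal_le_one.2 ?_
    calc ⟪e, (ξ : H)⟫ ≤ ‖e‖ * ‖(ξ : H)‖ := real_inner_le_norm _ _
      _ = 1 := by rw [he, mem_sphere_zero_iff_norm.1 ξ.2, one_mul]
  exact lt_of_le_of_lt hle (sphMeas_univ_lt_top e he)

lemma gfun_pos : 0 < gfun e he e := by
  rw [gfun, sphMeas, lintegral_map (measurable_ginteg e) (measurable_nS e he)]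
  set U : Set H := Metric.ball ((3/2 : ℝ) • e) 4⁻¹ with hU
  have hnorm32 : ‖(3/2 : ℝ) • e‖ = 3/2 := by
    rw [norm_smul, he, Real.norm_eq_abs]; norm_num
  have hUfacts : ∀ x ∈ U, 1 ≤ ‖x‖ ∧ ‖x‖ ≤ 2 ∧ (2⁻¹ : ℝ) ≤ ⟪e, nSval e x⟫ := by
    intro x hx
    rw [hU, mem_ball] at hx
    have hdist : ‖x - (3/2 : ℝ) • e‖ < 4⁻¹ := by rwa [← dist_eq_norm]
    have h1 : ‖x‖ ≥ 5/4 := by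
      have := norm_sub_norm_le ((3/2 : ℝ) • e) x
      rw [norm_sub_rev x] at hdist
      rw [hnorm32] at this
      linarith
    have h2 : ‖x‖ ≤ 2 := by
      have := norm_le_norm_add_norm_sub' x ((3/2 : ℝ) • e)
      rw [hnorm32, norm_sub_rev] at this
      rw [norm_sub_rev x] at hdist
      linarith
    have hinner : ⟪e, x⟫ ≥ 5/4 := by
      have hsplit : ⟪e, x⟫ = ⟪e, (3/2 : ℝ) • e⟫ + ⟪e, x - (3/2 : ℝ) • e⟫ := by
        rw [← inner_add_right]; norm_num
      have h32 : ⟪e, (3/2 : ℝ) • e⟫ = 3/2 := by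
        rw [real_inner_smul_right, real_inner_self_eq_norm_sq, he]; norm_num
      have habs : |⟪e, x - (3/2 : ℝ) • e⟫| ≤ ‖x - (3/2 : ℝ) • e‖ := by
        have := abs_real_inner_le_norm e (x - (3/2 : ℝ) • e)
        rwa [he, one_mul] at this
      have := neg_abs_le ⟪e, x - (3/2 : ℝ) • e⟫
      rw [hsplit, h32]
      linarith
    have hx0 : x ≠ 0 := by
      intro h; rw [h, norm_zero] at h1; linarith
    refine ⟨by linarith, h2, ?_⟩
    rw [nSval_of_ne e hx0, real_inner_smul_right]
    have hxpos : (0 : ℝ) < ‖x‖ := by linarith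
    have hinv : (2⁻¹ : ℝ) ≤ ‖x‖⁻¹ := inv_anti₀ hxpos h2
    calc (2⁻¹ : ℝ) = 2⁻¹ * 1 := by ring
      _ ≤ ‖x‖⁻¹ * ⟪e, x⟫ := by
          apply mul_le_mul hinv (by linarith) (by norm_num) (le_of_lt (by positivity))
  have hUsub : U ⊆ ann H := fun x hx =>
    mem_ann_iff.2 ⟨(hUfacts x hx).1, (hUfacts x hx).2.1⟩
  calc (0 : ℝ≥0∞) < ENNReal.ofReal 2⁻¹ * volume U := by
        apply ENNReal.mul_pos
        · simp
        · exact (measure_ball_pos volume _ (by norm_num)).ne'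
    _ = ∫⁻ _ in U, ENNReal.ofReal 2⁻¹ ∂(volume : Measure H) := by
        rw [setLIntegral_const, mul_comm]
    _ ≤ ∫⁻ x in U, ENNReal.ofReal ⟪e, nSval e x⟫ ∂(volume : Measure H) := by
        refine setLIntegral_mono ((measurable_ginteg (H := H) e).comp
          (measurable_nS e he)) (fun x hx => ?_)
        exact ENNReal.ofReal_le_ofReal (hUfacts x hx).2.2
    _ ≤ ∫⁻ x in ann H, ENNReal.ofReal ⟪e, nSval e x⟫ ∂(volume : Measure H) :=
        lintegral_mono_set hUsub
    _ = ∫⁻ x in ann H, ENNReal.ofReal ⟪e, ((nS e he x : sphere (0:H) 1) : H)⟫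
          ∂(volume : Measure H) := rfl

/-- invariance of the product measure under the shear map -/
lemma shear_invariant (f : sphere (0 : H) 1 → ℝ) (hf : Measurable f)
    {C : Set (sphere (0 : H) 1 × ℝ)} (hC : MeasurableSet C) :
    ((sphMeas e he).prod volume) ((fun p => (p.1, p.2 + f p.1)) ⁻¹' C) =
      ((sphMeas e he).prod volume) C := by
  have hm : Measurable fun p : sphere (0 : H) 1 × ℝ => (p.1, p.2 + f p.1) :=
    measurable_fst.prodMk (measurable_snd.add (hf.comp measurable_fst))
  rw [Measure.prod_apply (hm hC), Measure.prod_apply hC]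
  refine lintegral_congr fun ξ => ?_
  have hslice : Prod.mk ξ ⁻¹' ((fun p : sphere (0 : H) 1 × ℝ => (p.1, p.2 + f p.1)) ⁻¹' C)
      = (fun t => t + f ξ) ⁻¹' (Prod.mk ξ ⁻¹' C) := rfl
  rw [hslice, measure_preimage_add_right]

/-- invariance of the product measure under the full motion map -/
lemma motion_invariant (L : H ≃ₗᵢ[ℝ] H) (b : H)
    {C : Set (sphere (0 : H) 1 × ℝ)} (hC : MeasurableSet C) :
    ((sphMeas e he).prod volume)
        ((fun p : sphere (0 : H) 1 × ℝ => (sphMap L p.1, p.2 + ⟪b, L p.1.1⟫)) ⁻¹' C) =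
      ((sphMeas e he).prod volume) C := by
  set f : sphere (0 : H) 1 → ℝ := fun η => ⟪b, (η : H)⟫ with hf
  have hfm : Measurable f :=
    (Continuous.inner continuous_const continuous_subtype_val).measurable
  have hdecomp : (fun p : sphere (0 : H) 1 × ℝ => (sphMap L p.1, p.2 + ⟪b, L p.1.1⟫))
      = (fun p : sphere (0 : H) 1 × ℝ => (p.1, p.2 + f p.1)) ∘
        (Prod.map (sphMap L) (id : ℝ → ℝ)) := rfl
  rw [hdecomp, Set.preimage_comp]
  have hP : MeasurePreserving (Prod.map (sphMap L) (id : ℝ → ℝ))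
      ((sphMeas e he).prod volume) ((sphMeas e he).prod volume) :=
    MeasurePreserving.prod ⟨(continuous_sphMap L).measurable, sphMeas_map e he L⟩
      (MeasurePreserving.id volume)
  have hmshear : Measurable fun p : sphere (0 : H) 1 × ℝ => (p.1, p.2 + f p.1) :=
    measurable_fst.prodMk (measurable_snd.add (hfm.comp measurable_fst))
  rw [hP.measure_preimage (hmshear hC).nullMeasurableSet]
  exact shear_invariant e he f hfm hC

end HSAux


open HSAux in
/-- On the space of half-spaces of a finite-dimensional real Hilbert space
there is a measure, invariant under all rigid motions, normalized so that
`μ {M : v ∈ M, w ∉ M} = ‖v - w‖`. -/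
theorem exists_invariant_halfspace_measure (H : Type*) [NormedAddCommGroup H]
    [InnerProductSpace ℝ H] [FiniteDimensional ℝ H] (hd : 1 ≤ Module.finrank ℝ H) :
    ∃ (m : MeasurableSpace (HalfSpaces H)) (μ : Measure (HalfSpaces H)),
      (∀ v : H, MeasurableSet {M : HalfSpaces H | v ∈ M.1}) ∧
      (∀ (φ : H ≃ᵢ H) (A : Set (HalfSpaces H)), MeasurableSet A →
        μ {M : HalfSpaces H | ⇑φ '' M.1 ∈ Subtype.val '' A} = μ A) ∧
      (∀ v w : H, μ {M : HalfSpaces H | v ∈ M.1 ∧ w ∉ M.1} = ENNReal.ofReal ‖v - w‖) := by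
  classical
  borelize H
  haveI : Nontrivial H := Module.nontrivial_of_finrank_pos (R := ℝ) hd
  obtain ⟨e, he⟩ : ∃ x : H, ‖x‖ = 1 := exists_norm_eq H zero_le_one
  letI m : MeasurableSpace (HalfSpaces H) := MeasurableSpace.map Efun inferInstance
  have hEmeas : @Measurable _ _ _ m (Efun (H := H)) := fun s hs => hs
  set σ : Measure (sphere (0:H) 1) := sphMeas e he with hσ
  set ge : ℝ≥0∞ := gfun e he e with hge
  have hge0 : ge ≠ 0 := (gfun_pos e he).ne'
  have hgetop : ge ≠ ⊤ := (gfun_lt_top e he).ne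
  set ν : Measure (sphere (0:H) 1 × ℝ) := ge⁻¹ • (σ.prod volume) with hν
  -- measurability of basic sets
  have hmle : ∀ v : H, MeasurableSet {p : sphere (0:H) 1 × ℝ | p.2 ≤ ⟪v, (p.1 : H)⟫} := by
    intro v
    exact measurableSet_le measurable_snd
      (Continuous.inner continuous_const (continuous_subtype_val.comp continuous_fst)).measurable
  refine ⟨m, Measure.map Efun ν, ?_, ?_, ?_⟩
  · -- measurability of {M | v ∈ M}
    intro v
    show MeasurableSet (Efun ⁻¹' {M : HalfSpaces H | v ∈ M.1})
    exact hmle v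
  · -- invariance
    intro φ A hA
    set L := φ.toRealLinearIsometryEquiv with hL
    set b := φ 0 with hb
    have hφ : ∀ x, φ x = L x + b := by
      intro x
      rw [hL, IsometryEquiv.toRealLinearIsometryEquiv_apply, hb, sub_add_cancel]
    set Sm : sphere (0:H) 1 × ℝ → sphere (0:H) 1 × ℝ :=
      fun p => (sphMap L p.1, p.2 + ⟪b, L (p.1 : H)⟫) with hSmdef
    have hSm : Measurable Sm := by
      apply Measurable.prodMk
      · exact ((continuous_sphMap L).comp continuous_fst).measurable
      · exact (measurable_snd.add (Continuous.measurable
          (Continuous.inner continuous_const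
            (L.continuous.comp (continuous_subtype_val.comp continuous_fst)))))
    have hApre : MeasurableSet (Efun ⁻¹' A) := hA
    have himg : ∀ (ξ : H) (t : ℝ),
        ⇑φ '' hsSet ξ t = hsSet (L ξ) (t + ⟪b, L ξ⟫) := by
      intro ξ t
      ext u
      constructor
      · rintro ⟨x, hx, rfl⟩
        show t + ⟪b, L ξ⟫ ≤ ⟪φ x, L ξ⟫
        rw [hφ x, inner_add_left, L.inner_map_map]
        have hx' : t ≤ ⟪x, ξ⟫ := hx
        linarith
      · intro hu
        refine ⟨φ.symm u, ?_, φ.apply_symm_apply u⟩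
        show t ≤ ⟪φ.symm u, ξ⟫
        have h2 : L (φ.symm u) = u - b := by
          have h := hφ (φ.symm u)
          rw [φ.apply_symm_apply] at h
          rw [eq_sub_iff_add_eq]
          exact h.symm
        have h3 : ⟪φ.symm u, ξ⟫ = ⟪u, L ξ⟫ - ⟪b, L ξ⟫ := by
          rw [← L.inner_map_map, h2, inner_sub_left]
        have hu' : t + ⟪b, L ξ⟫ ≤ ⟪u, L ξ⟫ := hu
        linarith
    have hpre : Efun ⁻¹' {M : HalfSpaces H | ⇑φ '' M.1 ∈ Subtype.val '' A}
        = Sm ⁻¹' (Efun ⁻¹' A) := by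
      ext p
      have h1 : (Efun (Sm p)).1 = ⇑φ '' (Efun p).1 := by
        show hsSet ((sphMap L p.1 : sphere (0:H) 1) : H) (p.2 + ⟪b, L (p.1 : H)⟫)
          = ⇑φ '' hsSet ((p.1 : H)) p.2
        rw [himg]
        rfl
      simp only [Set.mem_preimage, Set.mem_setOf_eq]
      rw [← h1]
      exact Subtype.coe_injective.mem_set_image
    have hAm : MeasurableSet[m] {M : HalfSpaces H | ⇑φ '' M.1 ∈ Subtype.val '' A} := by
      show MeasurableSet (Efun ⁻¹' {M : HalfSpaces H | ⇑φ '' M.1 ∈ Subtype.val '' A})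
      rw [hpre]
      exact hSm hApre
    rw [Measure.map_apply hEmeas hAm, Measure.map_apply hEmeas hA, hpre,
      Measure.smul_apply, Measure.smul_apply]
    congr 1
    exact motion_invariant e he L b hApre
  · -- normalization
    intro v w
    have hpre : Efun ⁻¹' {M : HalfSpaces H | v ∈ M.1 ∧ w ∉ M.1}
        = {p : sphere (0:H) 1 × ℝ | p.2 ≤ ⟪v, (p.1 : H)⟫} ∩
          {p : sphere (0:H) 1 × ℝ | p.2 ≤ ⟪w, (p.1 : H)⟫}ᶜ := rfl
    have hpre_meas : MeasurableSet (Efun ⁻¹' {M : HalfSpaces H | v ∈ M.1 ∧ w ∉ M.1}) := by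
      rw [hpre]; exact (hmle v).inter (hmle w).compl
    rw [Measure.map_apply hEmeas (hpre_meas : MeasurableSet[m] _),
      Measure.smul_apply, smul_eq_mul]
    have hprod : (σ.prod volume) (Efun ⁻¹' {M : HalfSpaces H | v ∈ M.1 ∧ w ∉ M.1})
        = gfun e he (v - w) := by
      rw [Measure.prod_apply hpre_meas, gfun]
      refine lintegral_congr fun ξ => ?_
      have hsl : Prod.mk ξ ⁻¹' (Efun ⁻¹' {M : HalfSpaces H | v ∈ M.1 ∧ w ∉ M.1})
          = Set.Ioc ⟪w, (ξ : H)⟫ ⟪v, (ξ : H)⟫ := by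
        ext t
        simp only [Set.mem_preimage, Set.mem_Ioc, Set.mem_setOf_eq]
        show (t ≤ ⟪v, (ξ : H)⟫ ∧ ¬ t ≤ ⟪w, (ξ : H)⟫) ↔ _
        rw [not_le, and_comm]
      rw [hsl, Real.volume_Ioc, inner_sub_left]
    rw [hprod, gfun_norm e he (v - w)]
    rw [show ge⁻¹ * (ENNReal.ofReal ‖v - w‖ * gfun e he e)
        = ENNReal.ofReal ‖v - w‖ * (ge⁻¹ * ge) by rw [← hge]; ring]
    rw [ENNReal.inv_mul_cancel hge0 hgetop, mul_one]
end

section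
/- If a countable group Γ has Kazhdan property (T), then for every measure-preserving action of Γ on a measure space (Ω,𝓑,μ) and every S ∈ 𝓑 with μ(S △ gS) < ∞ for all g ∈ Γ, one has sup_{g∈Γ} μ(S △ gS) < ∞. -/
open MeasureTheory
open scoped symmDiff ENNReal


lemma neg_def_aux {H : Type*} [NormedAddCommGroup H] [InnerProductSpace ℝ H]
    (n : ℕ) (v : Fin n → H) (c : Fin n → ℝ) (hc : ∑ i, c i = 0) :
    ∑ i, ∑ j, c i * c j * ‖v i - v j‖ ^ 2 ≤ 0 := by
  have hnorm : ‖∑ i, c i • v i‖ ^ 2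
      = ∑ i, ∑ j, c i * c j * (inner ℝ (v i) (v j) : ℝ) := by
    rw [← real_inner_self_eq_norm_sq, sum_inner]
    refine Finset.sum_congr rfl fun i _ => ?_
    rw [real_inner_smul_left, inner_sum, Finset.mul_sum]
    refine Finset.sum_congr rfl fun j _ => ?_
    rw [real_inner_smul_right]; ring
  have h1 : ∑ i, ∑ j, c i * c j * ‖v i - v j‖ ^ 2
      = (∑ i, ∑ j, (c i * ‖v i‖ ^ 2) * c j) + (∑ i, ∑ j, c i * (c j * ‖v j‖ ^ 2))
        - 2 * ∑ i, ∑ j, c i * c j * (inner ℝ (v i) (v j) : ℝ) := by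
    rw [Finset.mul_sum, ← Finset.sum_add_distrib, ← Finset.sum_sub_distrib]
    refine Finset.sum_congr rfl fun i _ => ?_
    rw [Finset.mul_sum, ← Finset.sum_add_distrib, ← Finset.sum_sub_distrib]
    refine Finset.sum_congr rfl fun j _ => ?_
    rw [norm_sub_sq_real]; ring
  have h2 : ∑ i, ∑ j, (c i * ‖v i‖ ^ 2) * c j = 0 := by
    simp_rw [← Finset.mul_sum, hc, mul_zero, Finset.sum_const_zero]
  have h3 : ∑ i, ∑ j, c i * (c j * ‖v j‖ ^ 2) = 0 := by
    simp_rw [← Finset.mul_sum]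
    rw [← Finset.sum_mul, hc, zero_mul]
  rw [h1, h2, h3, ← hnorm]
  nlinarith [sq_nonneg ‖∑ i, c i • v i‖]

lemma indicator_split {Ω : Type*} (A B : Set Ω) (ω : Ω) :
    (A \ B).indicator (fun _ => (1:ℝ)) ω - (B \ A).indicator (fun _ => (1:ℝ)) ω
      = A.indicator (fun _ => (1:ℝ)) ω - B.indicator (fun _ => (1:ℝ)) ω := by
  by_cases hA : ω ∈ A <;> by_cases hB : ω ∈ B <;>
    simp [Set.indicator_apply, hA, hB]

lemma sq_indicator_sub {Ω : Type*} (A B : Set Ω) (ω : Ω) :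
    (A.indicator (fun _ => (1:ℝ)) ω - B.indicator (fun _ => (1:ℝ)) ω)
      * (A.indicator (fun _ => (1:ℝ)) ω - B.indicator (fun _ => (1:ℝ)) ω)
      = (A ∆ B).indicator (fun _ => (1:ℝ)) ω := by
  by_cases hA : ω ∈ A <;> by_cases hB : ω ∈ B <;>
    simp [Set.indicator_apply, hA, hB, Set.mem_symmDiff]

/-- Property (T) via the Delorme–Guichardet characterization: every left-invariant
(normalized, symmetric) negative definite kernel on the group is bounded. -/
def HasPropertyT (Γ : Type*) [Group Γ] : Prop :=
  ∀ f : Γ → Γ → ℝ,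
    (∀ x y, 0 ≤ f x y) →
    (∀ g x y, f (g * x) (g * y) = f x y) →
    (∀ x, f x x = 0) →
    (∀ x y, f x y = f y x) →
    (∀ (n : ℕ) (x : Fin n → Γ) (c : Fin n → ℝ), (∑ i, c i = 0) →
      ∑ i, ∑ j, c i * c j * f (x i) (x j) ≤ 0) →
    ∃ C : ℝ, ∀ x y, f x y ≤ C

/-- If a countable group has property (T), then for every measure-preserving
action on a measure space and every set `S` with `μ(S ∆ gS) < ∞` for all `g`, the quantities
`μ(S ∆ gS)` are uniformly bounded. -/
theorem propertyT_implies_uniform_bound (Γ : Type*) [Group Γ] [Countable Γ]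
    (hT : HasPropertyT Γ) :
    ∀ (Ω : Type) (_ : MeasurableSpace Ω) (μ : Measure Ω) (a : Γ → Ω → Ω),
      (∀ ω, a 1 ω = ω) →
      (∀ g h ω, a (g * h) ω = a g (a h ω)) →
      (∀ g, MeasurePreserving (a g) μ μ) →
      ∀ S : Set Ω, MeasurableSet S →
      (∀ g, μ (S ∆ (a g '' S)) ≠ ⊤) →
      ∃ C : ℝ≥0∞, C ≠ ⊤ ∧ ∀ g, μ (S ∆ (a g '' S)) ≤ C := by
  intro Ω m μ a h1 hmul hmp S hS hfin
  set P : Γ → Set Ω := fun g => a g⁻¹ ⁻¹' S with hPdef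
  have hP1 : P 1 = S := by
    simp only [hPdef, inv_one]
    ext ω; simp [h1]
  have himg : ∀ g, a g '' S = P g := by
    intro g
    ext ω
    constructor
    · rintro ⟨s, hs, rfl⟩
      show a g⁻¹ (a g s) ∈ S
      rw [← hmul, inv_mul_cancel, h1]; exact hs
    · intro hω
      exact ⟨a g⁻¹ ω, hω, by rw [← hmul, mul_inv_cancel, h1]⟩
  have hmeasP : ∀ g, MeasurableSet (P g) := fun g => (hmp g⁻¹).measurable hS
  have hpre : ∀ g x, a g ⁻¹' P (g * x) = P x := by
    intro g x
    ext ω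
    show a (g * x)⁻¹ (a g ω) ∈ S ↔ a x⁻¹ ω ∈ S
    rw [← hmul, mul_inv_rev, inv_mul_cancel_right]
  have hinv : ∀ g x y, μ (P (g * x) ∆ P (g * y)) = μ (P x ∆ P y) := by
    intro g x y
    have := (hmp g).measure_preimage ((hmeasP (g*x)).symmDiff (hmeasP (g*y))).nullMeasurableSet
    rw [← this]
    congr 1
    rw [Set.preimage_symmDiff, hpre, hpre]
  have hfinP : ∀ x y, μ (P x ∆ P y) ≠ ⊤ := by
    intro x y
    have h := hinv x⁻¹ x y
    rw [inv_mul_cancel, hP1] at h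
    rw [← h]
    rw [← himg]
    exact hfin _
  -- Lp vectors
  have hfin1 : ∀ g, μ (P g \ S) ≠ ⊤ := by
    intro g
    refine ne_top_of_le_ne_top (hfinP 1 g) (measure_mono ?_)
    rw [hP1, Set.symmDiff_def]
    exact le_sup_right
  have hfin2 : ∀ g, μ (S \ P g) ≠ ⊤ := by
    intro g
    refine ne_top_of_le_ne_top (hfinP 1 g) (measure_mono ?_)
    rw [hP1, Set.symmDiff_def]
    exact le_sup_left
  set v : Γ → Lp ℝ 2 μ := fun g =>
    indicatorConstLp 2 ((hmeasP g).diff hS) (hfin1 g) (1:ℝ)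
      - indicatorConstLp 2 (hS.diff (hmeasP g)) (hfin2 g) (1:ℝ) with hvdef
  have hcoe : ∀ g, (v g : Ω → ℝ) =ᵐ[μ]
      fun ω => (P g).indicator (fun _ => (1:ℝ)) ω - S.indicator (fun _ => (1:ℝ)) ω := by
    intro g
    filter_upwards [Lp.coeFn_sub (indicatorConstLp 2 ((hmeasP g).diff hS) (hfin1 g) (1:ℝ))
        (indicatorConstLp 2 (hS.diff (hmeasP g)) (hfin2 g) (1:ℝ)),
      indicatorConstLp_coeFn (p := 2) (μ := μ) (hs := (hmeasP g).diff hS) (hμs := hfin1 g) (c := (1:ℝ)),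
      indicatorConstLp_coeFn (p := 2) (μ := μ) (hs := hS.diff (hmeasP g)) (hμs := hfin2 g) (c := (1:ℝ))]
      with ω hsub hA hB
    rw [hvdef]
    simp only [hsub, Pi.sub_apply, hA, hB]
    exact indicator_split _ _ ω
  have hnormsq : ∀ x y, ‖v x - v y‖ ^ 2 = (μ (P x ∆ P y)).toReal := by
    intro x y
    have hc : ((v x - v y : Lp ℝ 2 μ) : Ω → ℝ) =ᵐ[μ]
        fun ω => (P x).indicator (fun _ => (1:ℝ)) ω - (P y).indicator (fun _ => (1:ℝ)) ω := by
      filter_upwards [Lp.coeFn_sub (v x) (v y), hcoe x, hcoe y] with ω hsub hx hy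
      rw [hsub, Pi.sub_apply, hx, hy]; ring
    rw [← real_inner_self_eq_norm_sq, L2.inner_def]
    have : ∫ ω, (inner ℝ ((v x - v y : Lp ℝ 2 μ) ω) ((v x - v y : Lp ℝ 2 μ) ω) : ℝ) ∂μ
        = ∫ ω, (P x ∆ P y).indicator (fun _ => (1:ℝ)) ω ∂μ := by
      refine integral_congr_ae ?_
      filter_upwards [hc] with ω hω
      rw [RCLike.inner_apply, starRingEnd_apply, star_trivial, hω, sq_indicator_sub]
    rw [this, integral_indicator_const _ ((hmeasP x).symmDiff (hmeasP y)), smul_eq_mul, mul_one]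
    rfl
  -- apply property (T)
  set f : Γ → Γ → ℝ := fun x y => (μ (P x ∆ P y)).toReal with hfdef
  obtain ⟨C, hC⟩ := hT f
    (fun x y => ENNReal.toReal_nonneg)
    (fun g x y => by simp only [hfdef]; rw [hinv])
    (fun x => by simp [hfdef, symmDiff_self])
    (fun x y => by simp only [hfdef]; rw [symmDiff_comm])
    (by
      intro n x c hc
      have : ∀ i j, f (x i) (x j) = ‖v (x i) - v (x j)‖ ^ 2 := fun i j => (hnormsq _ _).symm
      simp_rw [this]
      exact neg_def_aux n (fun i => v (x i)) c hc)
  refine ⟨ENNReal.ofReal C, ENNReal.ofReal_ne_top, fun g => ?_⟩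
  have h := hC 1 g
  rw [hfdef] at h
  have hμ : μ (S ∆ (a g '' S)) = μ (P 1 ∆ P g) := by rw [hP1, himg]
  rw [hμ]
  calc μ (P 1 ∆ P g) = ENNReal.ofReal ((μ (P 1 ∆ P g)).toReal) :=
        (ENNReal.ofReal_toReal (hfinP 1 g)).symm
    _ ≤ ENNReal.ofReal C := ENNReal.ofReal_le_ofReal h
end
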